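/- Let Ω be a symmetric positive definite matrix with smallest eigenvalue at least 1/M₀ and satisfying the bandability condition max_j Σ_{i: |i-j| ≥ m} |ω_{ij}| ≤ M m^{-α}. With the decomposition of the previous Schur identity, where B₂ denotes the submatrix of Ω whose entries all satisfy |i - j| ≥ m, the correction matrix W = B₂ C⁻¹ B₂ᵀ satisfies ‖W‖ ≤ M² M₀ m^{-2α} in spectral norm. -/

import Mathlib

open Finset Matrix

/-- Spectral (operator) norm of a real matrix. -/
noncomputable def specNorm {m n : Type*} [Fintype m] [Fintype n] [DecidableEq n]
    (A : Matrix m n ℝ) : ℝ :=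
  ‖LinearMap.toContinuousLinearMap (Matrix.toEuclideanLin A)‖

open scoped Matrix.Norms.L2Operator

lemma specNorm_eq_l2opNorm {m n : Type*} [Fintype m] [Fintype n] [DecidableEq n]
    (A : Matrix m n ℝ) : specNorm A = ‖A‖ := rfl

/-- Schur test: a matrix whose row sums and column sums of absolute values are both
bounded by `K` has `ℓ²`-operator norm at most `K`. -/
lemma schur_bound {m n : Type*} [Fintype m] [Fintype n] [DecidableEq n]
    (A : Matrix m n ℝ) (K : ℝ) (hK : 0 ≤ K)
    (hrow : ∀ a, ∑ b, |A a b| ≤ K) (hcol : ∀ b, ∑ a, |A a b| ≤ K) :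
    ‖A‖ ≤ K := by
  rw [Matrix.l2_opNorm_def]
  refine ContinuousLinearMap.opNorm_le_bound _ hK fun x => ?_
  have happ : (LinearEquiv.trans Matrix.toEuclideanLin LinearMap.toContinuousLinearMap A) x
      = (WithLp.equiv 2 (m → ℝ)).symm (A *ᵥ (WithLp.equiv 2 (n → ℝ)) x) := by
    simp [Matrix.toEuclideanLin_apply]
  rw [happ]
  set y : n → ℝ := (WithLp.equiv 2 (n → ℝ)) x with hy
  have key : ∑ i, ((A *ᵥ y) i) ^ 2 ≤ K ^ 2 * ∑ j, (y j) ^ 2 := by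
    have h1 : ∀ i, ((A *ᵥ y) i) ^ 2 ≤ (∑ j, |A i j|) * (∑ j, |A i j| * (y j) ^ 2) := by
      intro i
      have hcs := Finset.sum_sq_le_sum_mul_sum_of_sq_eq_mul (univ : Finset n)
        (r := fun j => |A i j| * |y j|) (f := fun j => |A i j|)
        (g := fun j => |A i j| * (y j) ^ 2)
        (fun _ _ => abs_nonneg _) (fun _ _ => mul_nonneg (abs_nonneg _) (sq_nonneg _))
        (fun j _ => by rw [mul_pow, sq_abs (y j)]; ring)
      refine le_trans ?_ hcs
      have : |(A *ᵥ y) i| ≤ ∑ j, |A i j| * |y j| := by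
        rw [Matrix.mulVec, dotProduct]
        exact (Finset.abs_sum_le_sum_abs _ _).trans (le_of_eq (by simp [abs_mul]))
      calc ((A *ᵥ y) i) ^ 2 = |(A *ᵥ y) i| ^ 2 := (sq_abs _).symm
        _ ≤ (∑ j, |A i j| * |y j|) ^ 2 := by
            exact pow_le_pow_left₀ (abs_nonneg _) this 2
    calc ∑ i, ((A *ᵥ y) i) ^ 2
        ≤ ∑ i, (∑ j, |A i j|) * (∑ j, |A i j| * (y j) ^ 2) :=
          Finset.sum_le_sum (fun i _ => h1 i)
      _ ≤ ∑ i, K * (∑ j, |A i j| * (y j) ^ 2) := by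
          refine Finset.sum_le_sum fun i _ => ?_
          exact mul_le_mul_of_nonneg_right (hrow i)
            (Finset.sum_nonneg fun j _ => mul_nonneg (abs_nonneg _) (sq_nonneg _))
      _ = K * ∑ j, (∑ i, |A i j|) * (y j) ^ 2 := by
          rw [← Finset.mul_sum, Finset.sum_comm]
          simp_rw [Finset.sum_mul]
      _ ≤ K * ∑ j, K * (y j) ^ 2 := by
          refine mul_le_mul_of_nonneg_left (Finset.sum_le_sum fun j _ => ?_) hK
          exact mul_le_mul_of_nonneg_right (hcol j) (sq_nonneg _)
      _ = K ^ 2 * ∑ j, (y j) ^ 2 := by rw [← Finset.mul_sum]; ring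
  have hnx : ‖x‖ = Real.sqrt (∑ j, (y j) ^ 2) := by
    rw [EuclideanSpace.norm_eq]
    congr 1
    refine Finset.sum_congr rfl fun j _ => ?_
    rw [Real.norm_eq_abs, sq_abs]
    rfl
  have hnAx : ‖(WithLp.equiv 2 (m → ℝ)).symm (A *ᵥ y)‖
      = Real.sqrt (∑ i, ((A *ᵥ y) i) ^ 2) := by
    rw [EuclideanSpace.norm_eq]
    congr 1
    refine Finset.sum_congr rfl fun i _ => ?_
    rw [Real.norm_eq_abs, sq_abs]
    rfl
  rw [hnAx, hnx]
  calc Real.sqrt (∑ i, ((A *ᵥ y) i) ^ 2)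
      ≤ Real.sqrt (K ^ 2 * ∑ j, (y j) ^ 2) := Real.sqrt_le_sqrt key
    _ = K * Real.sqrt (∑ j, (y j) ^ 2) := by
        rw [Real.sqrt_mul (sq_nonneg K), Real.sqrt_sq hK]

/-- Quadratic-form lower bound from an eigenvalue lower bound. -/
lemma quad_lower {p : ℕ} (Ω : Matrix (Fin p) (Fin p) ℝ) (hpd : Ω.PosDef)
    (μ : ℝ) (hmin : ∀ i, μ ≤ hpd.1.eigenvalues i) (y : Fin p → ℝ) :
    μ * (y ⬝ᵥ y) ≤ y ⬝ᵥ Ω *ᵥ y := by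
  have hΩ := hpd.1
  set U : Matrix (Fin p) (Fin p) ℝ := (hΩ.eigenvectorUnitary : Matrix (Fin p) (Fin p) ℝ) with hU
  have hspec : Ω = U * Matrix.diagonal (RCLike.ofReal ∘ hΩ.eigenvalues) * star U :=
    hΩ.spectral_theorem
  have hUU : U * star U = 1 := (Matrix.mem_unitaryGroup_iff).mp hΩ.eigenvectorUnitary.2
  have hdiag : Ω - μ • (1 : Matrix (Fin p) (Fin p) ℝ)
      = U * (Matrix.diagonal (fun i => hΩ.eigenvalues i - μ)) * star U := by
    have : Matrix.diagonal (fun i => hΩ.eigenvalues i - μ)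
        = Matrix.diagonal (RCLike.ofReal ∘ hΩ.eigenvalues) - μ • 1 := by
      rw [Matrix.smul_one_eq_diagonal, Matrix.diagonal_sub]
      rfl
    rw [this, Matrix.mul_sub, Matrix.sub_mul, ← hspec]
    congr 1
    rw [Matrix.mul_smul, Matrix.smul_mul, mul_one, hUU]
  have hpsd : (Ω - μ • (1 : Matrix (Fin p) (Fin p) ℝ)).PosSemidef := by
    rw [hdiag]
    have : (Matrix.diagonal (fun i => hΩ.eigenvalues i - μ)).PosSemidef :=
      Matrix.posSemidef_diagonal_iff.mpr fun i => sub_nonneg.mpr (hmin i)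
    have := this.mul_mul_conjTranspose_same U
    rwa [← Matrix.star_eq_conjTranspose] at this
  have h0 := hpsd.dotProduct_mulVec_nonneg y
  simp only [star_trivial, Matrix.sub_mulVec, dotProduct_sub,
    Matrix.smul_mulVec, Matrix.one_mulVec, dotProduct_smul,
    smul_eq_mul] at h0
  linarith

lemma sum_embed {p t : ℕ} (c : Fin t → Fin p)
    (x : Fin t → ℝ) (f : Fin p → ℝ) :
    ∑ i, (∑ a, if i = c a then x a else 0) * f i = ∑ a, x a * f (c a) := by
  have : ∀ i : Fin p, (∑ a, if i = c a then x a else 0) * f i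
      = ∑ a, if i = c a then x a * f i else 0 := by
    intro i; rw [Finset.sum_mul]; exact Finset.sum_congr rfl fun a _ => by
      split <;> simp_all
  simp_rw [this]
  rw [Finset.sum_comm]
  refine Finset.sum_congr rfl fun a _ => ?_
  rw [Finset.sum_ite_eq' univ (c a) (fun i => x a * f i)]
  simp

/-- The quadratic form lower bound passes to principal submatrices. -/
lemma quadC {p t : ℕ} (Ω : Matrix (Fin p) (Fin p) ℝ)
    (c : Fin t → Fin p) (hc : Function.Injective c) (μ : ℝ)
    (hlow : ∀ y : Fin p → ℝ, μ * (y ⬝ᵥ y) ≤ y ⬝ᵥ Ω *ᵥ y) (x : Fin t → ℝ) :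
    μ * (x ⬝ᵥ x) ≤ x ⬝ᵥ (Ω.submatrix c c) *ᵥ x := by
  set y : Fin p → ℝ := fun i => ∑ a, if i = c a then x a else 0 with hy
  have hyc : ∀ a, y (c a) = x a := by
    intro a
    simp only [hy, hc.eq_iff, Finset.sum_ite_eq, Finset.mem_univ, if_true]
  have h1 : y ⬝ᵥ y = x ⬝ᵥ x := by
    unfold dotProduct
    rw [show ∑ i, y i * y i = ∑ a, x a * y (c a) from sum_embed c x y]
    exact Finset.sum_congr rfl fun a _ => by rw [hyc a]
  have h2 : y ⬝ᵥ Ω *ᵥ y = x ⬝ᵥ (Ω.submatrix c c) *ᵥ x := by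
    unfold dotProduct
    rw [show ∑ i, y i * (Ω *ᵥ y) i = ∑ a, x a * (Ω *ᵥ y) (c a) from sum_embed c x _]
    refine Finset.sum_congr rfl fun a _ => ?_
    congr 1
    show (Ω *ᵥ y) (c a) = ((Ω.submatrix c c) *ᵥ x) a
    unfold Matrix.mulVec dotProduct
    rw [show ∑ j, Ω (c a) j * y j = ∑ j, y j * Ω (c a) j from by simp [mul_comm]]
    rw [sum_embed c x (fun j => Ω (c a) j)]
    simp [Matrix.submatrix, mul_comm]
  rw [← h1, ← h2]
  exact hlow y

/-- If `C ⪰ (1/M₀) I` then `‖C⁻¹‖ ≤ M₀`. -/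
lemma inv_norm_bound {t : ℕ} (C : Matrix (Fin t) (Fin t) ℝ) (hC : C.PosDef)
    (M₀ : ℝ) (hM₀ : 0 < M₀)
    (hlow : ∀ x : Fin t → ℝ, (1 / M₀) * (x ⬝ᵥ x) ≤ x ⬝ᵥ C *ᵥ x) :
    ‖C⁻¹‖ ≤ M₀ := by
  rw [Matrix.l2_opNorm_def]
  refine ContinuousLinearMap.opNorm_le_bound _ hM₀.le fun v => ?_
  have happ : (LinearEquiv.trans Matrix.toEuclideanLin LinearMap.toContinuousLinearMap C⁻¹) v
      = (WithLp.equiv 2 (Fin t → ℝ)).symm (C⁻¹ *ᵥ (WithLp.equiv 2 (Fin t → ℝ)) v) := by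
    simp [Matrix.toEuclideanLin_apply]
  rw [happ]
  set x : Fin t → ℝ := (WithLp.equiv 2 (Fin t → ℝ)) v with hx
  set w : Fin t → ℝ := C⁻¹ *ᵥ x with hw
  have hCw : C *ᵥ w = x := by
    rw [hw, Matrix.mulVec_mulVec, Matrix.mul_nonsing_inv _
      ((Matrix.isUnit_iff_isUnit_det _).mp hC.isUnit), Matrix.one_mulVec]
  set nw : ℝ := Real.sqrt (∑ i, (w i) ^ 2) with hnw
  set nx : ℝ := Real.sqrt (∑ i, (x i) ^ 2) with hnx
  have hnw0 : 0 ≤ nw := Real.sqrt_nonneg _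
  have hnx0 : 0 ≤ nx := Real.sqrt_nonneg _
  have hnwsq : nw ^ 2 = ∑ i, (w i) ^ 2 :=
    Real.sq_sqrt (Finset.sum_nonneg fun i _ => sq_nonneg _)
  have hcs : w ⬝ᵥ x ≤ nw * nx := by
    have := Real.sum_mul_le_sqrt_mul_sqrt (univ : Finset (Fin t)) w x
    simpa [dotProduct, hnw, hnx] using this
  have hkey : (1 / M₀) * nw ^ 2 ≤ nw * nx := by
    rw [hnwsq]
    calc (1 / M₀) * ∑ i, (w i) ^ 2 = (1 / M₀) * (w ⬝ᵥ w) := by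
          simp [dotProduct, sq]
      _ ≤ w ⬝ᵥ C *ᵥ w := hlow w
      _ = w ⬝ᵥ x := by rw [hCw]
      _ ≤ nw * nx := hcs
  have hwle : nw ≤ M₀ * nx := by
    rcases eq_or_lt_of_le hnw0 with h | h
    · nlinarith
    · have h2 : nw ^ 2 ≤ M₀ * (nw * nx) := by
        calc nw ^ 2 = M₀ * ((1 / M₀) * nw ^ 2) := by field_simp
          _ ≤ M₀ * (nw * nx) := mul_le_mul_of_nonneg_left hkey hM₀.le
      nlinarith [h2, h]
  have hnAx : ‖(WithLp.equiv 2 (Fin t → ℝ)).symm (C⁻¹ *ᵥ x)‖ = nw := by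
    rw [EuclideanSpace.norm_eq, hnw]
    congr 1
    exact Finset.sum_congr rfl fun i _ => by rw [Real.norm_eq_abs, sq_abs]; rfl
  have hnv : ‖v‖ = nx := by
    rw [EuclideanSpace.norm_eq, hnx]
    congr 1
    exact Finset.sum_congr rfl fun i _ => by rw [Real.norm_eq_abs, sq_abs]; rfl
  rw [hnAx, hnv]
  exact hwle

/-- Let `Ω` be symmetric positive definite with smallest eigenvalue at least `1/M₀`,
satisfying the bandability condition. If `B₂ = Ω.submatrix r c` is a submatrix of `Ω`
all of whose entries satisfy `|i - j| ≥ m`, and `C = Ω.submatrix c c` is the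
corresponding principal submatrix, then the correction `W = B₂ C⁻¹ B₂ᵀ` satisfies
`‖W‖ ≤ M² M₀ m^{-2α}`. -/
theorem correction_term_bound (p s t m : ℕ) (hm : 0 < m)
    (Ω : Matrix (Fin p) (Fin p) ℝ) (hpd : Ω.PosDef)
    (M M₀ α : ℝ) (hM : 0 < M) (hM₀ : 0 < M₀) (hα : 0 < α)
    (hmin : ∀ i : Fin p, 1 / M₀ ≤ hpd.1.eigenvalues i)
    (hband : ∀ m' : ℕ, 0 < m' → ∀ j : Fin p,
      ∑ i ∈ univ.filter (fun i : Fin p => (m' : ℤ) ≤ |(i : ℤ) - (j : ℤ)|), |Ω i j|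
        ≤ M * (m' : ℝ) ^ (-α))
    (r : Fin s → Fin p) (c : Fin t → Fin p)
    (hr : Function.Injective r) (hc : Function.Injective c)
    (hfar : ∀ (a : Fin s) (b : Fin t), (m : ℤ) ≤ |((r a : ℕ) : ℤ) - ((c b : ℕ) : ℤ)|) :
    specNorm (Ω.submatrix r c * (Ω.submatrix c c)⁻¹ * (Ω.submatrix r c)ᵀ)
      ≤ M ^ 2 * M₀ * (m : ℝ) ^ (-(2 * α)) := by
  set B := Ω.submatrix r c with hB
  set C := Ω.submatrix c c with hC
  set K : ℝ := M * (m : ℝ) ^ (-α) with hKdef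
  have hmpos : (0 : ℝ) < (m : ℝ) := Nat.cast_pos.mpr hm
  have hK : 0 ≤ K := by positivity
  have hsymm : ∀ i j, Ω i j = Ω j i := fun i j => by
    have := hpd.1.apply j i
    simpa using this
  -- quadratic form lower bounds
  have hlowΩ : ∀ y : Fin p → ℝ, (1 / M₀) * (y ⬝ᵥ y) ≤ y ⬝ᵥ Ω *ᵥ y :=
    quad_lower Ω hpd (1 / M₀) hmin
  have hCq : ∀ x : Fin t → ℝ, (1 / M₀) * (x ⬝ᵥ x) ≤ x ⬝ᵥ C *ᵥ x :=
    quadC Ω c hc (1 / M₀) hlowΩ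
  have hCpd : C.PosDef := by
    refine Matrix.posDef_iff_dotProduct_mulVec.mpr ⟨hpd.1.submatrix c, fun x hx => ?_⟩
    have hxx : 0 < x ⬝ᵥ x := by
      rcases lt_or_eq_of_le (Finset.sum_nonneg
        (fun i (_ : i ∈ univ) => mul_self_nonneg (x i))) with h | h
      · exact h
      · exact absurd (dotProduct_self_eq_zero.mp h.symm) hx
    have := hCq x
    have h0 : 0 < (1 / M₀) * (x ⬝ᵥ x) := mul_pos (by positivity) hxx
    simpa [star_trivial] using lt_of_lt_of_le h0 this
  have hCinv : ‖C⁻¹‖ ≤ M₀ := inv_norm_bound C hCpd M₀ hM₀ hCq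
  -- column sums of B
  have hcolB : ∀ b : Fin t, ∑ a, |B a b| ≤ K := by
    intro b
    have hsub : ∑ a, |Ω (r a) (c b)|
        ≤ ∑ i ∈ univ.filter (fun i : Fin p => (m : ℤ) ≤ |(i : ℤ) - ((c b : ℕ) : ℤ)|),
            |Ω i (c b)| := by
      have himg : ∑ i ∈ univ.image r, |Ω i (c b)| = ∑ a : Fin s, |Ω (r a) (c b)| :=
        Finset.sum_image (fun a _ a' _ h => hr h)
      rw [← himg]
      refine Finset.sum_le_sum_of_subset_of_nonneg ?_ (fun i _ _ => abs_nonneg _)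
      intro i hi
      simp only [Finset.mem_image, Finset.mem_univ, true_and] at hi
      obtain ⟨a, rfl⟩ := hi
      simp only [Finset.mem_filter, Finset.mem_univ, true_and]
      exact hfar a b
    exact hsub.trans (hband m hm (c b))
  -- row sums of B
  have hrowB : ∀ a : Fin s, ∑ b, |B a b| ≤ K := by
    intro a
    have hswap : ∑ b : Fin t, |B a b| = ∑ b : Fin t, |Ω (c b) (r a)| := by
      refine Finset.sum_congr rfl fun b _ => ?_
      rw [hB]
      simp only [Matrix.submatrix_apply]
      rw [hsymm (r a) (c b)]
    rw [hswap]
    have hsub : ∑ b, |Ω (c b) (r a)|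
        ≤ ∑ i ∈ univ.filter (fun i : Fin p => (m : ℤ) ≤ |(i : ℤ) - ((r a : ℕ) : ℤ)|),
            |Ω i (r a)| := by
      have himg : ∑ i ∈ univ.image c, |Ω i (r a)| = ∑ b : Fin t, |Ω (c b) (r a)| :=
        Finset.sum_image (fun b _ b' _ h => hc h)
      rw [← himg]
      refine Finset.sum_le_sum_of_subset_of_nonneg ?_ (fun i _ _ => abs_nonneg _)
      intro i hi
      simp only [Finset.mem_image, Finset.mem_univ, true_and] at hi
      obtain ⟨b, rfl⟩ := hi
      simp only [Finset.mem_filter, Finset.mem_univ, true_and]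
      rw [abs_sub_comm]
      exact hfar a b
    exact hsub.trans (hband m hm (r a))
  have hBnorm : ‖B‖ ≤ K := schur_bound B K hK hrowB hcolB
  have hBtnorm : ‖Bᵀ‖ ≤ K := by
    rw [← Matrix.conjTranspose_eq_transpose_of_trivial, Matrix.l2_opNorm_conjTranspose]
    exact hBnorm
  have hmain : ‖B * C⁻¹ * Bᵀ‖ ≤ K * M₀ * K := by
    calc ‖B * C⁻¹ * Bᵀ‖ ≤ ‖B * C⁻¹‖ * ‖Bᵀ‖ := Matrix.l2_opNorm_mul _ _
      _ ≤ ‖B‖ * ‖C⁻¹‖ * ‖Bᵀ‖ := by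
          refine mul_le_mul_of_nonneg_right (Matrix.l2_opNorm_mul _ _) (norm_nonneg _)
      _ ≤ K * M₀ * K := by
          have h1 : ‖B‖ * ‖C⁻¹‖ ≤ K * M₀ :=
            mul_le_mul hBnorm hCinv (norm_nonneg _) hK
          exact mul_le_mul h1 hBtnorm (norm_nonneg _) (by positivity)
  have hfin : K * M₀ * K = M ^ 2 * M₀ * (m : ℝ) ^ (-(2 * α)) := by
    rw [hKdef]
    rw [show (-(2 * α)) = (-α) + (-α) by ring, Real.rpow_add hmpos]
    ring
  rw [specNorm_eq_l2opNorm]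
  exact hmain.trans (le_of_eq hfin)
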